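/- Let k have characteristic zero and let A be an artinian graded algebra with the Weak Lefschetz Property and Hilbert function (h_0, h_1, ..., h_s). If h_{i−1} > h_i for some i ≤ s, then h_j ≥ h_{j+1} for all j with i − 1 ≤ j < s; i.e., once the Hilbert function of a WLP algebra strictly decreases, it is non-increasing thereafter. -/

import Mathlib

set_option maxHeartbeats 1000000
set_option synthInstance.maxHeartbeats 200000


open MvPolynomial

/-- The dimension of the degree-`i` component of the graded algebra `R/I`, where
`R = k[x_1,...,x_r]` is standard graded: it is the image of the space of homogeneous
polynomials of degree `i` in the quotient. -/
noncomputable def hilb {k : Type*} [Field k] {σ : Type*} (I : Ideal (MvPolynomial σ k))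
    (i : ℕ) : ℕ :=
  Module.finrank k ((homogeneousSubmodule σ k i).map (Ideal.Quotient.mkₐ k I).toLinearMap)

/-- Injectivity of the multiplication map `×f : [R/I]_i → [R/I]_{i + deg f}`. -/
def mulInj {k : Type*} [Field k] {σ : Type*} (I : Ideal (MvPolynomial σ k))
    (f : MvPolynomial σ k) (i : ℕ) : Prop :=
  ∀ g ∈ homogeneousSubmodule σ k i, f * g ∈ I → g ∈ I

/-- Surjectivity of the multiplication map `×f : [R/I]_i → [R/I]_j` (with `j = i + deg f`). -/
def mulSurj {k : Type*} [Field k] {σ : Type*} (I : Ideal (MvPolynomial σ k))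
    (f : MvPolynomial σ k) (i j : ℕ) : Prop :=
  ∀ g ∈ homogeneousSubmodule σ k j, ∃ h ∈ homogeneousSubmodule σ k i, g - f * h ∈ I

section Aux

variable {k : Type*} [Field k] {σ : Type*} (I : Ideal (MvPolynomial σ k))

lemma aux_hilb_le_of_mulInj [Module.Finite k (MvPolynomial σ k ⧸ I)]
    {ℓ : MvPolynomial σ k} (hℓ : ℓ ∈ homogeneousSubmodule σ k 1)
    {i : ℕ} (h : mulInj I ℓ i) : hilb I i ≤ hilb I (i + 1) := by
  classical
  set φ := (Ideal.Quotient.mkₐ k I).toLinearMap with hφ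
  set Vi := (homogeneousSubmodule σ k i).map φ with hVi
  set Vj := (homogeneousSubmodule σ k (i + 1)).map φ with hVj
  let L : (MvPolynomial σ k ⧸ I) →ₗ[k] (MvPolynomial σ k ⧸ I) :=
    LinearMap.mulLeft k (Ideal.Quotient.mk I ℓ)
  have hmap : Vi.map L ≤ Vj := by
    rintro _ ⟨_, ⟨g, hg, rfl⟩, rfl⟩
    refine ⟨ℓ * g, ?_, ?_⟩
    · have := ((mem_homogeneousSubmodule _ _).1 hℓ).mul ((mem_homogeneousSubmodule _ _).1 hg)
      rw [add_comm] at this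
      exact (mem_homogeneousSubmodule _ _).2 this
    · simp [φ, L, LinearMap.mulLeft_apply, map_mul]
  have hinj : Function.Injective (L.domRestrict Vi) := by
    rw [← LinearMap.ker_eq_bot, LinearMap.ker_eq_bot']
    rintro ⟨x, hx⟩ hLx
    obtain ⟨g, hg, rfl⟩ := hx
    have h1 : ℓ * g ∈ I := by
      rw [← Ideal.Quotient.eq_zero_iff_mem]
      simpa [L, φ, LinearMap.domRestrict_apply, LinearMap.mulLeft_apply, ← map_mul] using hLx
    have h2 : g ∈ I := h g hg h1
    exact Subtype.ext (by simpa [φ, Ideal.Quotient.eq_zero_iff_mem] using h2)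
  have e1 : Module.finrank k Vi = Module.finrank k (Vi.map L) := by
    rw [← LinearMap.finrank_range_of_inj hinj, LinearMap.range_domRestrict]
  calc hilb I i = Module.finrank k Vi := rfl
    _ = Module.finrank k (Vi.map L) := e1
    _ ≤ Module.finrank k Vj := Submodule.finrank_mono hmap
    _ = hilb I (i + 1) := rfl

lemma aux_hilb_le_of_mulSurj [Module.Finite k (MvPolynomial σ k ⧸ I)]
    {ℓ : MvPolynomial σ k}
    {i : ℕ} (h : mulSurj I ℓ i (i + 1)) : hilb I (i + 1) ≤ hilb I i := by
  classical
  set φ := (Ideal.Quotient.mkₐ k I).toLinearMap with hφ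
  set Vi := (homogeneousSubmodule σ k i).map φ with hVi
  set Vj := (homogeneousSubmodule σ k (i + 1)).map φ with hVj
  let L : (MvPolynomial σ k ⧸ I) →ₗ[k] (MvPolynomial σ k ⧸ I) :=
    LinearMap.mulLeft k (Ideal.Quotient.mk I ℓ)
  have hmap : Vj ≤ Vi.map L := by
    rintro _ ⟨g, hg, rfl⟩
    obtain ⟨hh, hhmem, hgI⟩ := h g hg
    refine ⟨φ hh, ⟨hh, hhmem, rfl⟩, ?_⟩
    have : Ideal.Quotient.mk I (g - ℓ * hh) = 0 := (Ideal.Quotient.eq_zero_iff_mem).2 hgI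
    have h2 : Ideal.Quotient.mk I g = Ideal.Quotient.mk I (ℓ * hh) := by
      rwa [map_sub, sub_eq_zero] at this
    simp [L, φ, map_mul, h2]
  calc hilb I (i + 1) = Module.finrank k Vj := rfl
    _ ≤ Module.finrank k (Vi.map L) := Submodule.finrank_mono hmap
    _ ≤ Module.finrank k Vi := Submodule.finrank_map_le _ _
    _ = hilb I i := rfl

end Aux

lemma aux_mulSurj_succ {k : Type*} [Field k] {r : ℕ} (I : Ideal (MvPolynomial (Fin r) k))
    {ℓ : MvPolynomial (Fin r) k} (hℓ : ℓ ∈ homogeneousSubmodule (Fin r) k 1)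
    {j : ℕ} (h : mulSurj I ℓ j (j + 1)) : mulSurj I ℓ (j + 1) (j + 2) := by
  classical
  let C : Submodule k (MvPolynomial (Fin r) k) :=
    { carrier := {g | ∃ w ∈ homogeneousSubmodule (Fin r) k (j + 1), g - ℓ * w ∈ I}
      add_mem' := by
        rintro a b ⟨wa, hwa, hia⟩ ⟨wb, hwb, hib⟩
        refine ⟨wa + wb, add_mem hwa hwb, ?_⟩
        have : a + b - ℓ * (wa + wb) = (a - ℓ * wa) + (b - ℓ * wb) := by ring
        rw [this]; exact add_mem hia hib
      zero_mem' := ⟨0, zero_mem _, by simpa using I.zero_mem⟩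
      smul_mem' := by
        rintro c a ⟨w, hw, hi⟩
        refine ⟨c • w, Submodule.smul_mem _ _ hw, ?_⟩
        have : c • a - ℓ * (c • w) = C c * (a - ℓ * w) := by
          simp only [MvPolynomial.smul_eq_C_mul]; ring
        rw [this]; exact Ideal.mul_mem_left _ _ hi }
  intro g hg
  have hghom := (mem_homogeneousSubmodule _ _).1 hg
  have hgC : g ∈ C := by
    rw [g.as_sum]
    refine Submodule.sum_mem _ fun d hd => ?_
    have hc : coeff d g ≠ 0 := MvPolynomial.mem_support_iff.1 hd
    have hdeg : d.degree = j + 2 := by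
      simp only [Finsupp.degree_eq_weight_one]; exact hghom hc
    have hdne : d ≠ 0 := by
      intro h0; rw [h0] at hdeg; simp [map_zero] at hdeg
    obtain ⟨t, ht⟩ : ∃ t, d t ≠ 0 := by
      by_contra hall
      push_neg at hall
      exact hdne (Finsupp.ext fun x => hall x)
    set d' := d - Finsupp.single t 1 with hd'
    have hdd : d = d' + Finsupp.single t 1 := by
      ext x
      simp only [Finsupp.add_apply, Finsupp.tsub_apply, Finsupp.single_apply, d']
      by_cases hx : t = x
      · subst hx
        simp only [if_pos rfl, reduceIte]
        omega
      · simp [hx]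
    have hdeg' : d'.degree = j + 1 := by
      have h1 : d.degree = d'.degree + (Finsupp.single t 1).degree := by
        rw [hdd]
        simp only [Finsupp.degree_eq_weight_one, map_add]
      have h2 : (Finsupp.single t 1).degree = 1 := by
        simp [Finsupp.degree_single]
      omega
    have hmon' : monomial d' (coeff d g) ∈ homogeneousSubmodule (Fin r) k (j + 1) :=
      (mem_homogeneousSubmodule _ _).2 (isHomogeneous_monomial _ hdeg')
    obtain ⟨w, hw, hwi⟩ := h _ hmon'
    refine ⟨X t * w, ?_, ?_⟩
    · have := (isHomogeneous_X k t).mul ((mem_homogeneousSubmodule _ _).1 hw)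
      rw [add_comm] at this
      exact (mem_homogeneousSubmodule _ _).2 this
    · have hsplit : monomial d (coeff d g) = X t * monomial d' (coeff d g) := by
        rw [X, monomial_mul, one_mul, add_comm, ← hdd]
      have : monomial d (coeff d g) - ℓ * (X t * w)
          = X t * (monomial d' (coeff d g) - ℓ * w) := by
        rw [hsplit]; ring
      rw [this]
      exact Ideal.mul_mem_left _ _ hwi
  obtain ⟨w, hw, hiw⟩ := hgC
  exact ⟨w, hw, hiw⟩

/-- once the Hilbert function of an artinian WLP algebra (char 0) strictly
decreases, it is non-increasing from that point on. -/
theorem stmt18 (k : Type*) [Field k] [CharZero k] (r : ℕ)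
    (I : Ideal (MvPolynomial (Fin r) k))
    (hhom : ∀ f ∈ I, ∀ n : ℕ, homogeneousComponent n f ∈ I)
    (hart : Module.Finite k (MvPolynomial (Fin r) k ⧸ I))
    (hwlp : ∃ ℓ ∈ homogeneousSubmodule (Fin r) k 1, ∀ i : ℕ,
      mulInj I ℓ i ∨ mulSurj I ℓ i (i + 1))
    (i : ℕ) (hdec : hilb I (i + 1) < hilb I i) :
    ∀ j : ℕ, i ≤ j → hilb I (j + 1) ≤ hilb I j := by
  haveI := hart
  obtain ⟨ℓ, hℓ, hwlp⟩ := hwlp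
  have base : mulSurj I ℓ i (i + 1) := by
    rcases hwlp i with h | h
    · exact absurd (aux_hilb_le_of_mulInj I hℓ h) (not_le.mpr hdec)
    · exact h
  have key : ∀ j, i ≤ j → mulSurj I ℓ j (j + 1) := by
    intro j hj
    induction j with
    | zero => 
      have : i = 0 := Nat.le_zero.1 hj
      subst this; exact base
    | succ n ih =>
      rcases Nat.lt_or_ge i (n + 1) with h' | h'
      · have hs := ih (by omega)
        exact aux_mulSurj_succ I hℓ hs
      · have : i = n + 1 := by omega
        subst this; exact base
  intro j hj
  exact aux_hilb_le_of_mulSurj I (key j hj)
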